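/- Let K be a field, let α, t ∈ K with α ≠ 0 and t ≠ 0, and let z ∈ K. Set μ = (α + α⁻¹)/t, and for integers i ≥ 1 and j ∈ ℤ define a_{i,j} = μ^(i−1)·(1 − z/t)·α^j + (z/t)·(μ − 1)^(i−1)·α^j and a′_{i,j} = (μ − 1)^(i−1)·α^j. Define the ternary operation x ∗ (y, w) = −x + t·y + z·w. Then for all i ≥ 1 and all j ∈ ℤ: a_{i, j−1} ∗ (a_{i+1, j}, a′_{i, j}) = a_{i, j+1}; equivalently, a_{i,j+1} + a_{i,j−1} = t·a_{i+1,j} + z·a′_{i,j}. (Verification of axiom K3 of a Kauffman algebra for the Jones–Conway–Kauffman polynomial algebra of Example 5.25.) -/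

import Mathlib

theorem JCK_axiom_K3 {K : Type*} [Field K] (α t z : K)
    (hα : α ≠ 0) (ht : t ≠ 0)
    (μ : K) (hμ : μ = (α + α⁻¹) / t)
    (a : ℕ → ℤ → K) (a' : ℕ → ℤ → K)
    (ha : ∀ (i : ℕ), 1 ≤ i → ∀ j : ℤ,
      a i j = μ ^ (i - 1) * (1 - z / t) * α ^ j + (z / t) * (μ - 1) ^ (i - 1) * α ^ j)
    (ha' : ∀ (i : ℕ), 1 ≤ i → ∀ j : ℤ, a' i j = (μ - 1) ^ (i - 1) * α ^ j)
    (op : K → K → K → K) (hop : ∀ x y w : K, op x y w = -x + t * y + z * w) :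
    ∀ (i : ℕ), 1 ≤ i → ∀ j : ℤ,
      op (a i (j - 1)) (a (i + 1) j) (a' i j) = a i (j + 1) := by
  intro i hi j
  obtain ⟨k, rfl⟩ := Nat.exists_eq_add_of_le hi
  rw [hop, ha _ (by omega), ha _ (by omega), ha _ (by omega), ha' _ (by omega)]
  have h1 : α ^ (j - 1) = α ^ j * α⁻¹ := by
    rw [zpow_sub₀ hα, zpow_one, div_eq_mul_inv]
  have h2 : α ^ (j + 1) = α ^ j * α := by rw [zpow_add₀ hα, zpow_one]
  have hk : 1 + k - 1 = k := by omega
  have hk2 : 1 + k + 1 - 1 = k + 1 := by omega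
  have htμ : t * μ = α + α⁻¹ := by rw [hμ]; field_simp
  have hz : t * (z / t) = z := by field_simp
  rw [h1, h2, hk, hk2]
  linear_combination (μ ^ k * (1 - z / t) + (z / t) * (μ - 1) ^ k) * α ^ j * htμ
    - (μ - 1) ^ k * α ^ j * hz
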